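/- arXiv:1008.5007 — 2 statements merged into one kernel-verified Lean document; each statement's English description precedes it below -/
import Mathlib

section
/- Let G be an n-dimensional torus whose Lie algebra 𝔤 is equipped with a Euclidean inner product such that the intersection of the integral lattice 𝔤_ℤ with the lattice generated by some orthonormal basis is a sublattice of rank n (a 'rational' metric). Then for every closed subgroup H of G, the image H^⊥ of the orthogonal complement of Lie(H) under the exponential map is a compact connected subgroup of G, and the intersection H ∩ H^⊥ is a finite set. -/
open Submodule Set Metric Filter

section TorusAux

variable {n : ℕ}

local notation "V" => EuclideanSpace ℝ (Fin n)

/-- The maximal subspace contained in an additive subgroup. -/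
def lineSub (Γ : AddSubgroup (EuclideanSpace ℝ (Fin n))) : Submodule ℝ (EuclideanSpace ℝ (Fin n)) where
  carrier := {ξ | ∀ t : ℝ, t • ξ ∈ Γ}
  add_mem' := by intro a b ha hb t; rw [smul_add]; exact Γ.add_mem (ha t) (hb t)
  zero_mem' := by intro t; rw [smul_zero]; exact Γ.zero_mem
  smul_mem' := by intro c x hx t; simpa [smul_smul] using hx (t * c)

lemma lineSub_mem {Γ : AddSubgroup (EuclideanSpace ℝ (Fin n))} {x : V} :
    x ∈ lineSub Γ ↔ ∀ t : ℝ, t • x ∈ Γ := Iff.rfl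

lemma lineSub_le {Γ : AddSubgroup (EuclideanSpace ℝ (Fin n))} {x : V} (hx : x ∈ lineSub Γ) :
    x ∈ Γ := by simpa using hx 1

lemma lineSub_mono {Γ Γ' : AddSubgroup (EuclideanSpace ℝ (Fin n))} (h : Γ ≤ Γ') :
    lineSub Γ ≤ lineSub Γ' := fun x hx t => h (hx t)

lemma lineSub_of_submodule_le {Γ : AddSubgroup (EuclideanSpace ℝ (Fin n))}
    {U : Submodule ℝ (EuclideanSpace ℝ (Fin n))} (h : ∀ x ∈ U, x ∈ Γ) :
    U ≤ lineSub Γ := fun x hx t => h _ (U.smul_mem t hx)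

/-- Lemma A: all sufficiently small elements of a closed subgroup lie in its maximal subspace. -/
lemma exists_small_subset_lineSub {Γ : AddSubgroup (EuclideanSpace ℝ (Fin n))}
    (hΓ : IsClosed (Γ : Set (EuclideanSpace ℝ (Fin n)))) :
    ∃ ε > 0, ∀ x ∈ Γ, ‖x‖ < ε → x ∈ lineSub Γ := by
  by_contra hcon
  push_neg at hcon
  -- get a sequence
  have hseq : ∀ k : ℕ, ∃ x : V, x ∈ Γ ∧ ‖x‖ < 1 / (k + 1) ∧ x ∉ lineSub Γ := by
    intro k
    obtain ⟨x, hx1, hx2, hx3⟩ := hcon (1 / (k + 1)) (by positivity)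
    exact ⟨x, hx1, hx2, hx3⟩
  choose x hxΓ hxn hxW using hseq
  set W := lineSub Γ with hW
  haveI : CompleteSpace W := FiniteDimensional.complete ℝ W
  set y : ℕ → V := fun k => x k - (orthogonalProjection W (x k) : V) with hy
  have hyΓ : ∀ k, y k ∈ Γ := fun k =>
    Γ.sub_mem (hxΓ k) (lineSub_le ((orthogonalProjection W (x k)).2))
  have hyO : ∀ k, y k ∈ Wᗮ := fun k => Submodule.sub_starProjection_mem_orthogonal (K := W) (x k)
  have hyne : ∀ k, y k ≠ 0 := by
    intro k h0
    apply hxW k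
    have : x k = (orthogonalProjection W (x k) : V) := by
      have := sub_eq_zero.mp h0; exact this
    rw [this]; exact (orthogonalProjection W (x k)).2
  have hynorm : ∀ k, ‖y k‖ ≤ ‖x k‖ := by
    intro k
    have hp : (orthogonalProjection W (x k) : V) ∈ W := (orthogonalProjection W (x k)).2
    have hinner : inner ℝ (y k) ((orthogonalProjection W (x k) : V)) = (0 : ℝ) := by
      have := (Submodule.mem_orthogonal W (y k)).mp (hyO k) _ hp
      rwa [real_inner_comm] at this
    have hxk : x k = y k + (orthogonalProjection W (x k) : V) := by simp [hy]
    have := norm_add_sq_real (y k) ((orthogonalProjection W (x k) : V))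
    rw [← hxk, hinner] at this
    nlinarith [norm_nonneg (y k), norm_nonneg (x k),
      norm_nonneg ((orthogonalProjection W (x k) : V)), sq_nonneg ‖(orthogonalProjection W (x k) : V)‖]
  have hyto : Tendsto (fun k => ‖y k‖) atTop (nhds 0) := by
    have h1 : Tendsto (fun k : ℕ => 1 / ((k : ℝ) + 1)) atTop (nhds 0) :=
      tendsto_one_div_add_atTop_nhds_zero_nat
    refine squeeze_zero (fun k => norm_nonneg _) (fun k => ?_) h1
    exact le_trans (hynorm k) (le_of_lt (hxn k))
  set u : ℕ → V := fun k => ‖y k‖⁻¹ • y k with hu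
  have husph : ∀ k, u k ∈ sphere (0 : V) 1 := by
    intro k
    simp only [mem_sphere_iff_norm, sub_zero, hu, norm_smul, norm_inv, norm_norm]
    rw [inv_mul_cancel₀ (norm_ne_zero_iff.mpr (hyne k))]
  obtain ⟨a, hasph, φ, hφ, hto⟩ := (isCompact_sphere (0 : V) 1).tendsto_subseq husph
  have hanorm : ‖a‖ = 1 := by simpa [mem_sphere_iff_norm] using hasph
  -- a ∈ Wᗮ
  have haO : a ∈ Wᗮ := by
    refine (Wᗮ.closed_of_finiteDimensional).mem_of_tendsto hto (Eventually.of_forall fun k => ?_)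
    exact Wᗮ.smul_mem _ (hyO (φ k))
  -- a ∈ W
  have haW : a ∈ W := by
    intro t
    have hyφto : Tendsto (fun k => ‖y (φ k)‖) atTop (nhds 0) :=
      hyto.comp hφ.tendsto_atTop
    -- z k := ⌊t / ‖y (φ k)‖⌋ • y (φ k)
    set m : ℕ → ℤ := fun k => ⌊t / ‖y (φ k)‖⌋ with hm
    have hzΓ : ∀ k, (m k : ℝ) • y (φ k) ∈ Γ := by
      intro k
      have := AddSubgroup.zsmul_mem Γ (hyΓ (φ k)) (m k)
      simpa [← Int.cast_smul_eq_zsmul ℝ] using this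
    have hcoef : Tendsto (fun k => (m k : ℝ) * ‖y (φ k)‖) atTop (nhds t) := by
      have hb1 : ∀ k, (m k : ℝ) * ‖y (φ k)‖ ≤ t := by
        intro k
        have h1 : (m k : ℝ) ≤ t / ‖y (φ k)‖ := Int.floor_le _
        have h2 : (0:ℝ) < ‖y (φ k)‖ := norm_pos_iff.mpr (hyne (φ k))
        calc (m k : ℝ) * ‖y (φ k)‖ ≤ (t / ‖y (φ k)‖) * ‖y (φ k)‖ := by
              exact mul_le_mul_of_nonneg_right h1 (le_of_lt h2)
          _ = t := div_mul_cancel₀ t (ne_of_gt h2)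
      have hb2 : ∀ k, t - ‖y (φ k)‖ ≤ (m k : ℝ) * ‖y (φ k)‖ := by
        intro k
        have h1 : t / ‖y (φ k)‖ - 1 ≤ (m k : ℝ) := le_of_lt (Int.sub_one_lt_floor _)
        have h2 : (0:ℝ) < ‖y (φ k)‖ := norm_pos_iff.mpr (hyne (φ k))
        have := mul_le_mul_of_nonneg_right h1 (le_of_lt h2)
        calc t - ‖y (φ k)‖ = (t / ‖y (φ k)‖ - 1) * ‖y (φ k)‖ := by
              field_simp
          _ ≤ (m k : ℝ) * ‖y (φ k)‖ := this
      have hlow : Tendsto (fun k => t - ‖y (φ k)‖) atTop (nhds t) := by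
        simpa using tendsto_const_nhds.sub hyφto
      exact tendsto_of_tendsto_of_tendsto_of_le_of_le hlow tendsto_const_nhds hb2 hb1
    have hzu : ∀ k, (m k : ℝ) • y (φ k) = ((m k : ℝ) * ‖y (φ k)‖) • u (φ k) := by
      intro k
      rw [hu]
      simp only [smul_smul]
      congr 1
      field_simp [norm_ne_zero_iff.mpr (hyne (φ k))]
    have hzto : Tendsto (fun k => (m k : ℝ) • y (φ k)) atTop (nhds (t • a)) := by
      simp only [hzu]
      exact hcoef.smul hto
    exact hΓ.mem_of_tendsto hzto (Eventually.of_forall fun k => hzΓ k)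
  have : a = 0 := by
    have := (Submodule.mem_orthogonal W a).mp haO a haW
    exact inner_self_eq_zero.mp this
  rw [this] at hanorm; simp at hanorm


/-- A closed subgroup with trivial maximal subspace is finite in every bounded set. -/
lemma finite_ball_of_lineSub_bot {Γ : AddSubgroup (EuclideanSpace ℝ (Fin n))}
    (hΓ : IsClosed (Γ : Set (EuclideanSpace ℝ (Fin n)))) (hbot : lineSub Γ = ⊥)
    {s : Set (EuclideanSpace ℝ (Fin n))} (hs : Bornology.IsBounded s) :
    ((Γ : Set (EuclideanSpace ℝ (Fin n))) ∩ s).Finite := by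
  obtain ⟨ε, hε, hsmall⟩ := exists_small_subset_lineSub hΓ
  by_contra hinf
  rw [← Set.not_infinite, not_not] at hinf
  obtain ⟨R, hR⟩ := hs.subset_closedBall 0
  have hsub : (Γ : Set V) ∩ s ⊆ (Γ : Set V) ∩ closedBall 0 R :=
    inter_subset_inter_right _ hR
  have hcpt : IsCompact ((Γ : Set V) ∩ closedBall 0 R) :=
    (isCompact_closedBall 0 R).of_isClosed_subset (hΓ.inter Metric.isClosed_closedBall)
      (inter_subset_right)
  obtain ⟨f, hfinj⟩ := hinf.natEmbedding
  have hmem : ∀ k : ℕ, (f k : V) ∈ (Γ : Set V) ∩ closedBall 0 R := fun k => hsub (f k).2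
  obtain ⟨a, _, φ, hφ, hto⟩ := hcpt.tendsto_subseq hmem
  have hcauchy : CauchySeq (fun k => ((f (φ k)) : V)) := hto.cauchySeq
  rw [Metric.cauchySeq_iff] at hcauchy
  obtain ⟨N, hN⟩ := hcauchy ε hε
  have h1 : dist ((f (φ (N+1))) : V) ((f (φ N)) : V) < ε := hN _ (by omega) _ (by omega)
  set d := ((f (φ (N+1))) : V) - ((f (φ N)) : V) with hd
  have hdΓ : d ∈ Γ := Γ.sub_mem (hmem (φ (N+1))).1 (hmem (φ N)).1
  have hdn : ‖d‖ < ε := by rwa [dist_eq_norm] at h1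
  have : d ∈ lineSub Γ := hsmall d hdΓ hdn
  rw [hbot] at this
  have hd0 : d = 0 := by simpa using this
  have : f (φ (N+1)) = f (φ N) := by
    apply Subtype.ext
    have := sub_eq_zero.mp hd0
    exact_mod_cast this
  have := hfinj this
  have := hφ.injective this
  omega

/-- A closed subgroup whose maximal subspace is trivial is countable. -/
lemma countable_of_lineSub_bot {Γ : AddSubgroup (EuclideanSpace ℝ (Fin n))}
    (hΓ : IsClosed (Γ : Set (EuclideanSpace ℝ (Fin n)))) (hbot : lineSub Γ = ⊥) :
    (Γ : Set (EuclideanSpace ℝ (Fin n))).Countable := by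
  have : (Γ : Set V) = ⋃ k : ℕ, ((Γ : Set V) ∩ closedBall 0 k) := by
    ext x
    simp only [Set.mem_iUnion, Set.mem_inter_iff, mem_closedBall, dist_zero_right]
    constructor
    · intro hx
      obtain ⟨k, hk⟩ := exists_nat_ge ‖x‖
      exact ⟨k, hx, hk⟩
    · rintro ⟨k, hk, -⟩; exact hk
  rw [this]
  exact Set.countable_iUnion fun k =>
    (finite_ball_of_lineSub_bot hΓ hbot (isBounded_closedBall)).countable

/-- A countable subgroup has trivial maximal subspace. -/
lemma lineSub_bot_of_countable {Γ : AddSubgroup (EuclideanSpace ℝ (Fin n))}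
    (hc : (Γ : Set (EuclideanSpace ℝ (Fin n))).Countable) : lineSub Γ = ⊥ := by
  rw [eq_bot_iff]
  intro x hx
  simp only [Submodule.mem_bot]
  by_contra hx0
  have hinj : Function.Injective (fun t : ℝ => t • x) := by
    intro s t hst
    simp only at hst
    have := sub_smul s t x
    rw [hst, sub_self] at this
    rcases smul_eq_zero.mp this.symm.symm with h | h
    · linarith [sub_eq_zero.mp h]
    · exact absurd h hx0
  have hrange : Set.range (fun t : ℝ => t • x) ⊆ (Γ : Set V) := by
    rintro _ ⟨t, rfl⟩; exact lineSub_mem.mp hx t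
  have : (Set.range (fun t : ℝ => t • x)).Countable := hc.mono hrange
  have := Set.countable_iff_exists_injOn.mp this  -- maybe not needed
  have huniv : (Set.univ : Set ℝ).Countable := by
    have := (hc.mono hrange).preimage hinj
    simpa using this
  exact Cardinal.not_countable_real huniv

/-- Lemma B : if `Γ` is closed with maximal subspace `W`, and `Λ ≤ Γ`, then
`W + Λ` (as a subgroup) is closed. -/
lemma isClosed_lineSub_sup {Λ Γ : AddSubgroup (EuclideanSpace ℝ (Fin n))}
    (hΓ : IsClosed (Γ : Set (EuclideanSpace ℝ (Fin n)))) (hΛΓ : Λ ≤ Γ) :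
    IsClosed (((lineSub Γ).toAddSubgroup ⊔ Λ : AddSubgroup (EuclideanSpace ℝ (Fin n))) :
      Set (EuclideanSpace ℝ (Fin n))) := by
  set W := lineSub Γ with hWdef
  set Sg := (W.toAddSubgroup ⊔ Λ : AddSubgroup (EuclideanSpace ℝ (Fin n))) with hSg
  set Γ₀ := Sg.topologicalClosure with hΓ₀
  have hSgG : Sg ≤ Γ := by
    rw [hSg, sup_le_iff]
    exact ⟨fun x hx => lineSub_le hx, hΛΓ⟩
  have hΓ₀Γ : Γ₀ ≤ Γ := AddSubgroup.topologicalClosure_minimal Sg hSgG hΓ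
  have hWΓ₀ : lineSub Γ₀ = W := by
    apply le_antisymm
    · exact lineSub_mono hΓ₀Γ
    · intro x hx
      rw [lineSub_mem]
      intro t
      exact Sg.le_topologicalClosure (by
        apply AddSubgroup.mem_sup_left
        exact W.smul_mem t hx)
  obtain ⟨ε, hε, hsmall⟩ := exists_small_subset_lineSub (Γ := Γ₀)
    (AddSubgroup.isClosed_topologicalClosure Sg)
  apply IsSeqClosed.isClosed
  intro x p hx hxp
  have hcauchy := hxp.cauchySeq
  rw [Metric.cauchySeq_iff] at hcauchy
  obtain ⟨N, hN⟩ := hcauchy ε hε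
  have hdiffW : ∀ k, N ≤ k → x k - x N ∈ W := by
    intro k hk
    have h1 : x k - x N ∈ Γ₀ := Sg.le_topologicalClosure (Sg.sub_mem (hx k) (hx N))
    have h2 : ‖x k - x N‖ < ε := by
      have := hN k hk N le_rfl
      rwa [dist_eq_norm] at this
    rw [← hWΓ₀]
    exact hsmall _ h1 h2
  have hmemtrans : p ∈ (fun v => x N + v) '' (W : Set (EuclideanSpace ℝ (Fin n))) := by
    have hclosed : IsClosed ((fun v => x N + v) '' (W : Set (EuclideanSpace ℝ (Fin n)))) :=
      (Homeomorph.addLeft (x N)).isClosedMap _ W.closed_of_finiteDimensional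
    refine hclosed.mem_of_tendsto hxp ?_
    filter_upwards [eventually_ge_atTop N] with k hk
    exact ⟨x k - x N, hdiffW k hk, by simp⟩
  obtain ⟨w, hw, hpw⟩ := hmemtrans
  obtain ⟨w', hw', lam', hlam', hsum⟩ := AddSubgroup.mem_sup.mp (hx N)
  have : p = (w' + w) + lam' := by rw [← hpw, ← hsum]; abel
  rw [this]
  exact AddSubgroup.mem_sup.mpr ⟨w' + w, W.toAddSubgroup.add_mem hw' hw, lam', hlam', rfl⟩

set_option maxHeartbeats 1000000 in
/-- Prop C : the maximal subspace of a closed subgroup containing a full lattice is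
spanned by its lattice points. -/
theorem lineSub_rational {Λ Γ : AddSubgroup (EuclideanSpace ℝ (Fin n))}
    (hdisc : DiscreteTopology Λ)
    (hfull : Submodule.span ℝ (Λ : Set (EuclideanSpace ℝ (Fin n))) = ⊤)
    (hΓ : IsClosed (Γ : Set (EuclideanSpace ℝ (Fin n)))) (hΛΓ : Λ ≤ Γ) :
    Submodule.span ℝ ((Λ : Set (EuclideanSpace ℝ (Fin n))) ∩ (lineSub Γ : Set (EuclideanSpace ℝ (Fin n))))
      = lineSub Γ := by
  set W := lineSub Γ with hWdef
  set W₁ := Submodule.span ℝ ((Λ : Set (EuclideanSpace ℝ (Fin n))) ∩ (W : Set (EuclideanSpace ℝ (Fin n)))) with hW₁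
  have hW₁W : W₁ ≤ W := by
    rw [hW₁, Submodule.span_le]
    exact fun x hx => hx.2
  refine le_antisymm hW₁W ?_
  intro ξ hξ
  -- the orthogonal part of ξ with respect to W₁
  haveI : CompleteSpace W₁ := FiniteDimensional.complete ℝ W₁
  set u := ξ - (orthogonalProjection W₁ ξ : EuclideanSpace ℝ (Fin n)) with hu
  have huW : u ∈ W := W.sub_mem hξ (hW₁W (orthogonalProjection W₁ ξ).2)
  have huO : u ∈ W₁ᗮ := Submodule.sub_starProjection_mem_orthogonal (K := W₁) ξ
  suffices hu0 : u = 0 by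
    have : ξ = (orthogonalProjection W₁ ξ : EuclideanSpace ℝ (Fin n)) := by
      rw [hu] at hu0; exact sub_eq_zero.mp hu0
    rw [this]; exact (orthogonalProjection W₁ ξ).2
  by_contra hu0
  have hunorm : 0 < ‖u‖ := norm_pos_iff.mpr hu0
  -- ℤ-basis of Λ and covering radius
  set L := AddSubgroup.toIntSubmodule Λ with hL
  haveI hdL : DiscreteTopology L := by
    have h : (L : Set (EuclideanSpace ℝ (Fin n))) = (Λ : Set (EuclideanSpace ℝ (Fin n))) :=
      AddSubgroup.coe_toIntSubmodule Λ
    exact DiscreteTopology.of_subset (s := (Λ : Set (EuclideanSpace ℝ (Fin n)))) hdisc h.le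
  haveI hzL : IsZLattice ℝ L := ⟨by rw [AddSubgroup.coe_toIntSubmodule]; exact hfull⟩
  haveI := ZLattice.module_free ℝ L
  set b0 := Module.Free.chooseBasis ℤ L with hb0
  set bR := Module.Basis.ofZLatticeBasis ℝ L b0 with hbR
  obtain ⟨R, hRsub⟩ := (ZSpan.fundamentalDomain_isBounded bR).subset_closedBall 0
  -- the fractional parts of t • u
  set c : ℕ → EuclideanSpace ℝ (Fin n) := fun t => ZSpan.fract bR ((t : ℝ) • u) with hc
  have hcR : ∀ t, ‖c t‖ ≤ R := by
    intro t
    have := hRsub (ZSpan.fract_mem_fundamentalDomain bR ((t : ℝ) • u))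
    rwa [mem_closedBall, dist_zero_right] at this
  have hR0 : 0 ≤ R := le_trans (norm_nonneg _) (hcR 0)
  set lam : ℕ → EuclideanSpace ℝ (Fin n) := fun t => (ZSpan.floor bR ((t : ℝ) • u) : EuclideanSpace ℝ (Fin n)) with hlam
  have hlamΛ : ∀ t, lam t ∈ Λ := by
    intro t
    have h1 : lam t ∈ Submodule.span ℤ (Set.range ⇑bR) := (ZSpan.floor bR ((t : ℝ) • u)).2
    rw [hbR, Module.Basis.ofZLatticeBasis_span] at h1
    have h2 : lam t ∈ (L : Set (EuclideanSpace ℝ (Fin n))) := h1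
    rwa [AddSubgroup.coe_toIntSubmodule] at h2
  have hdecomp : ∀ t : ℕ, (t : ℝ) • u - lam t = c t := by
    intro t; rw [hc, hlam]; simp [ZSpan.fract_apply]
  -- the projection p onto Wᗮ
  haveI : CompleteSpace W := FiniteDimensional.complete ℝ W
  set p : EuclideanSpace ℝ (Fin n) → EuclideanSpace ℝ (Fin n) :=
    fun x => x - (orthogonalProjection W x : EuclideanSpace ℝ (Fin n)) with hp
  have hpO : ∀ x, p x ∈ Wᗮ := fun x => Submodule.sub_starProjection_mem_orthogonal (K := W) x
  have hpW : ∀ x, x - p x ∈ W := by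
    intro x; rw [hp]; simpa using (orthogonalProjection W x).2
  have hpzero : ∀ x ∈ W, p x = 0 := by
    intro x hx
    show x - _ = 0
    rw [show ((orthogonalProjection W x : EuclideanSpace ℝ (Fin n))) = x from (starProjection_eq_self_iff (K := W)).mpr hx, sub_self]
  have hpsub : ∀ x y, p (x - y) = p x - p y := by
    intro x y
    simp only [hp, map_sub, Submodule.coe_sub]
    abel
  have hpnorm : ∀ x, ‖p x‖ ≤ ‖x‖ := by
    intro x
    have hdir : inner ℝ (p x) ((orthogonalProjection W x : EuclideanSpace ℝ (Fin n))) = (0:ℝ) := by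
      have := (Submodule.mem_orthogonal W (p x)).mp (hpO x) _ (orthogonalProjection W x).2
      rwa [real_inner_comm] at this
    have hxk : x = p x + (orthogonalProjection W x : EuclideanSpace ℝ (Fin n)) := by
      simp only [hp]; abel
    have hns := norm_add_sq_real (p x) ((orthogonalProjection W x : EuclideanSpace ℝ (Fin n)))
    rw [← hxk, hdir] at hns
    nlinarith [norm_nonneg (p x), norm_nonneg x,
      norm_nonneg ((orthogonalProjection W x : EuclideanSpace ℝ (Fin n))), sq_nonneg ‖(orthogonalProjection W x : EuclideanSpace ℝ (Fin n))‖]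
  -- the closed discrete group Γ' = (W + Λ) ∩ Wᗮ
  set Sg := (W.toAddSubgroup ⊔ Λ : AddSubgroup (EuclideanSpace ℝ (Fin n))) with hSg
  set Γ' := (Sg ⊓ Wᗮ.toAddSubgroup : AddSubgroup (EuclideanSpace ℝ (Fin n))) with hΓ'
  have hΓ'closed : IsClosed (Γ' : Set (EuclideanSpace ℝ (Fin n))) := by
    rw [hΓ']
    have : ((Sg ⊓ Wᗮ.toAddSubgroup : AddSubgroup (EuclideanSpace ℝ (Fin n))) : Set (EuclideanSpace ℝ (Fin n)))
        = (Sg : Set (EuclideanSpace ℝ (Fin n))) ∩ (Wᗮ : Set (EuclideanSpace ℝ (Fin n))) := rfl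
    rw [this]
    exact (isClosed_lineSub_sup hΓ hΛΓ).inter Wᗮ.closed_of_finiteDimensional
  have hΓ'bot : lineSub Γ' = ⊥ := by
    rw [eq_bot_iff]
    intro x hx
    have h1 : x ∈ W := by
      have hSgG : Sg ≤ Γ := by
        rw [hSg, sup_le_iff]; exact ⟨fun y hy => lineSub_le hy, hΛΓ⟩
      exact lineSub_mono (le_trans inf_le_left hSgG) hx
    have h2 : x ∈ Wᗮ := (lineSub_le hx).2
    have : inner ℝ x x = (0:ℝ) := (Submodule.mem_orthogonal W x).mp h2 x h1
    simp [inner_self_eq_zero.mp this]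
  have hfin : ((Γ' : Set (EuclideanSpace ℝ (Fin n))) ∩ closedBall 0 R).Finite :=
    finite_ball_of_lineSub_bot hΓ'closed hΓ'bot isBounded_closedBall
  -- p (lam t) lies in this finite set
  have hplam : ∀ t : ℕ, p (lam t) ∈ (Γ' : Set (EuclideanSpace ℝ (Fin n))) ∩ closedBall 0 R := by
    intro t
    have h1 : p (lam t) = -(p (c t)) := by
      have : lam t = (t : ℝ) • u - c t := by rw [← hdecomp t]; abel
      rw [this, hpsub, hpzero _ (W.smul_mem _ huW)]
      abel
    constructor
    · constructor
      · -- p (lam t) ∈ Sg : lam t ∈ Λ and p (lam t) - lam t ∈ W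
        have hW' : p (lam t) - lam t ∈ W := by
          have := hpW (lam t)
          have h2 : p (lam t) - lam t = -(lam t - p (lam t)) := by abel
          rw [h2]; exact W.neg_mem this
        refine AddSubgroup.mem_sup.mpr ⟨p (lam t) - lam t, hW', lam t, hlamΛ t, by abel⟩
      · exact hpO (lam t)
    · rw [mem_closedBall, dist_zero_right, h1, norm_neg]
      exact le_trans (hpnorm _) (hcR t)
  -- pigeonhole
  haveI : Finite ↥((Γ' : Set (EuclideanSpace ℝ (Fin n))) ∩ closedBall 0 R) := hfin.to_subtype
  set g : ℕ → ↥((Γ' : Set (EuclideanSpace ℝ (Fin n))) ∩ closedBall 0 R) :=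
    fun t => ⟨p (lam t), hplam t⟩ with hg
  obtain ⟨y, hy⟩ := Finite.exists_infinite_fiber g
  have hyinf : (g ⁻¹' {y}).Infinite := Set.infinite_coe_iff.mp hy
  obtain ⟨s, hs, -⟩ := hyinf.exists_gt 0
  obtain ⟨M, hM⟩ := exists_nat_gt ((2 * R * ‖u‖) / ‖u‖ ^ 2)
  obtain ⟨t, ht, hts⟩ := hyinf.exists_gt (s + M)
  have hgeq : p (lam t) = p (lam s) := by
    have h1 : g t = g s := by rw [Set.mem_preimage, Set.mem_singleton_iff] at hs ht; rw [hs, ht]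
    exact congrArg Subtype.val h1
  -- δ ∈ Λ ∩ W ⊆ W₁
  set δ := lam t - lam s with hδ
  have hδΛ : δ ∈ Λ := Λ.sub_mem (hlamΛ t) (hlamΛ s)
  have hδW : δ ∈ W := by
    have h1 : p δ = 0 := by rw [hδ, hpsub, hgeq, sub_self]
    have := hpW δ
    rwa [h1, sub_zero] at this
  have hδW₁ : δ ∈ W₁ := Submodule.subset_span ⟨hδΛ, hδW⟩
  have hδu : inner ℝ δ u = (0 : ℝ) := by
    have := (Submodule.mem_orthogonal W₁ u).mp huO δ hδW₁
    exact this
  -- compute the inner ℝ product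
  have hδeq : δ = ((t : ℝ) - s) • u - (c t - c s) := by
    have h1 := hdecomp t
    have h2 := hdecomp s
    have : lam t = (t : ℝ) • u - c t := by rw [← h1]; abel
    have h2' : lam s = (s : ℝ) • u - c s := by rw [← h2]; abel
    rw [hδ, this, h2', sub_smul]; abel
  have hinner : inner ℝ δ u = ((t:ℝ) - s) * ‖u‖ ^ 2 - inner ℝ (c t - c s) u := by
    rw [hδeq, inner_sub_left, real_inner_smul_left, real_inner_self_eq_norm_sq]
  have hCS : |(inner ℝ (c t - c s) u : ℝ)| ≤ 2 * R * ‖u‖ := by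
    refine le_trans (abs_real_inner_le_norm _ _) ?_
    have : ‖c t - c s‖ ≤ 2 * R := by
      calc ‖c t - c s‖ ≤ ‖c t‖ + ‖c s‖ := norm_sub_le _ _
        _ ≤ R + R := add_le_add (hcR t) (hcR s)
        _ = 2 * R := by ring
    exact mul_le_mul_of_nonneg_right this (norm_nonneg u)
  have hlarge : ((t:ℝ) - s) * ‖u‖ ^ 2 > 2 * R * ‖u‖ := by
    have h1 : (M : ℝ) < (t : ℝ) - s := by
      have h0 : ((s : ℝ) + M) < t := by exact_mod_cast hts
      linarith
    have h2 : (2 * R * ‖u‖) / ‖u‖ ^ 2 < (t:ℝ) - s := lt_trans hM h1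
    have h3 : (0:ℝ) < ‖u‖ ^ 2 := by positivity
    calc 2 * R * ‖u‖ = ((2 * R * ‖u‖) / ‖u‖ ^ 2) * ‖u‖ ^ 2 := by field_simp
      _ < ((t:ℝ) - s) * ‖u‖ ^ 2 := by exact mul_lt_mul_of_pos_right h2 h3
  rw [hinner] at hδu
  have := abs_le.mp hCS
  linarith

/-- A discrete subgroup has trivial maximal subspace. -/
lemma lineSub_bot_of_discrete {Λ : AddSubgroup (EuclideanSpace ℝ (Fin n))}
    (hdisc : DiscreteTopology Λ) : lineSub Λ = ⊥ := by
  rw [eq_bot_iff]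
  intro x hx
  simp only [Submodule.mem_bot]
  by_contra hx0
  have hmem : ∀ k : ℕ, (1 / (k + 1 : ℝ)) • x ∈ Λ := fun k => lineSub_mem.mp hx _
  set u : ℕ → ↥Λ := fun k => ⟨(1 / (k + 1 : ℝ)) • x, hmem k⟩ with hu
  have hto : Tendsto u atTop (nhds (⟨0, Λ.zero_mem⟩ : ↥Λ)) := by
    rw [tendsto_subtype_rng]
    have h1 : Tendsto (fun k : ℕ => 1 / ((k : ℝ) + 1)) atTop (nhds 0) :=
      tendsto_one_div_add_atTop_nhds_zero_nat
    have := h1.smul_const x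
    simpa [hu] using this
  have hopen : IsOpen ({(⟨0, Λ.zero_mem⟩ : ↥Λ)} : Set ↥Λ) := isOpen_discrete _
  have hev : ∀ᶠ k in atTop, u k ∈ ({(⟨0, Λ.zero_mem⟩ : ↥Λ)} : Set ↥Λ) :=
    hto.eventually_mem (hopen.mem_nhds rfl)
  obtain ⟨k, hk⟩ := hev.exists
  have : (1 / (k + 1 : ℝ)) • x = 0 := by
    have := Set.mem_singleton_iff.mp hk
    exact congrArg Subtype.val this
  rcases smul_eq_zero.mp this with h | h
  · have : (0:ℝ) < 1 / (k + 1 : ℝ) := by positivity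
    rw [h] at this; exact lt_irrefl 0 this
  · exact hx0 h

/-- Existence of a uniform denominator for inner ℝ products of lattice vectors,
given the rationality hypothesis. -/
lemma exists_denominator {Λ : AddSubgroup (EuclideanSpace ℝ (Fin n))}
    (hdisc : DiscreteTopology Λ)
    (hfull : Submodule.span ℝ (Λ : Set (EuclideanSpace ℝ (Fin n))) = ⊤)
    (hrat : ∃ b : OrthonormalBasis (Fin n) ℝ (EuclideanSpace ℝ (Fin n)),
      Submodule.span ℝ
        (((AddSubgroup.closure (Set.range b)) ⊓ Λ : AddSubgroup (EuclideanSpace ℝ (Fin n))) :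
          Set (EuclideanSpace ℝ (Fin n))) = ⊤) :
    ∃ N : ℕ, 0 < N ∧ ∀ x ∈ Λ, ∀ y ∈ Λ, ∃ k : ℤ, (N : ℝ) * (inner ℝ x y : ℝ) = k := by
  classical
  obtain ⟨b, hb⟩ := hrat
  set Zb := AddSubgroup.closure (Set.range ⇑b) with hZb
  -- inner ℝ products of elements of Zb are integers
  have hZbint : ∀ x ∈ Zb, ∀ y ∈ Zb, ∃ k : ℤ, (inner ℝ x y : ℝ) = k := by
    have hbase : ∀ i : Fin n, ∀ y ∈ Zb, ∃ k : ℤ, (inner ℝ (b i) y : ℝ) = k := by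
      intro i y hy
      induction hy using AddSubgroup.closure_induction with
      | mem z hz =>
        obtain ⟨j, rfl⟩ := hz
        have h := orthonormal_iff_ite.mp b.orthonormal i j
        by_cases hij : i = j
        · exact ⟨1, by rw [h]; simp [hij]⟩
        · exact ⟨0, by rw [h]; simp [hij]⟩
      | zero => exact ⟨0, by simp⟩
      | add z w _ _ hz hw =>
        obtain ⟨k1, hk1⟩ := hz; obtain ⟨k2, hk2⟩ := hw
        exact ⟨k1 + k2, by rw [inner_add_right, hk1, hk2]; push_cast; ring⟩
      | neg z _ hz =>
        obtain ⟨k, hk⟩ := hz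
        exact ⟨-k, by rw [inner_neg_right, hk]; push_cast; ring⟩
    intro x hx
    induction hx using AddSubgroup.closure_induction with
    | mem z hz =>
      obtain ⟨i, rfl⟩ := hz
      exact hbase i
    | zero => exact fun y hy => ⟨0, by simp⟩
    | add z w _ _ hz hw =>
      intro y hy
      obtain ⟨k1, hk1⟩ := hz y hy; obtain ⟨k2, hk2⟩ := hw y hy
      exact ⟨k1 + k2, by rw [inner_add_left, hk1, hk2]; push_cast; ring⟩
    | neg z _ hz =>
      intro y hy
      obtain ⟨k, hk⟩ := hz y hy
      exact ⟨-k, by rw [inner_neg_left, hk]; push_cast; ring⟩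
  -- the sublattice Λ₀
  set Λ₀ := Zb ⊓ Λ with hΛ₀
  haveI hdΛ : DiscreteTopology Λ := hdisc
  have hΛclosed : IsClosed (Λ : Set (EuclideanSpace ℝ (Fin n))) := AddSubgroup.isClosed_of_discrete
  have hΛbot : lineSub Λ = ⊥ := lineSub_bot_of_discrete hdisc
  set L₀ := AddSubgroup.toIntSubmodule Λ₀ with hL₀
  haveI hdL₀ : DiscreteTopology L₀ := by
    have h : (L₀ : Set (EuclideanSpace ℝ (Fin n))) ⊆ (Λ : Set (EuclideanSpace ℝ (Fin n))) := by
      rw [AddSubgroup.coe_toIntSubmodule]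
      exact fun x hx => hx.2
    exact DiscreteTopology.of_subset hdisc h
  haveI hzL₀ : IsZLattice ℝ L₀ := ⟨by rw [AddSubgroup.coe_toIntSubmodule]; exact hb⟩
  haveI := ZLattice.module_free ℝ L₀
  set b0 := Module.Free.chooseBasis ℤ L₀ with hb0
  set bR := Module.Basis.ofZLatticeBasis ℝ L₀ b0 with hbR
  obtain ⟨R, hRsub⟩ := (ZSpan.fundamentalDomain_isBounded bR).subset_closedBall 0
  have hspan0 : ∀ v : EuclideanSpace ℝ (Fin n), v ∈ Submodule.span ℤ (Set.range ⇑bR) → v ∈ Λ₀ := by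
    intro v hv
    rw [Module.Basis.ofZLatticeBasis_span] at hv
    have h3 : v ∈ (L₀ : Set (EuclideanSpace ℝ (Fin n))) := hv
    rwa [hL₀, AddSubgroup.coe_toIntSubmodule] at h3
  have hfin : ((Λ : Set (EuclideanSpace ℝ (Fin n))) ∩ closedBall 0 R).Finite :=
    finite_ball_of_lineSub_bot hΛclosed hΛbot isBounded_closedBall
  haveI : Finite ↥((Λ : Set (EuclideanSpace ℝ (Fin n))) ∩ closedBall 0 R) := hfin.to_subtype
  -- every lattice vector has a positive multiple in Λ₀
  have hmult : ∀ x ∈ Λ, ∃ k : ℕ, 0 < k ∧ (k : ℤ) • x ∈ Λ₀ := by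
    intro x hxΛ
    set f : ℕ → EuclideanSpace ℝ (Fin n) := fun j => ZSpan.fract bR ((j : ℤ) • x) with hf
    have hfmem : ∀ j : ℕ, f j ∈ (Λ : Set (EuclideanSpace ℝ (Fin n))) ∩ closedBall 0 R := by
      intro j
      constructor
      · have h1 : f j = (j : ℤ) • x - (ZSpan.floor bR ((j : ℤ) • x) : EuclideanSpace ℝ (Fin n)) :=
          ZSpan.fract_apply bR _
        rw [h1]
        apply Λ.sub_mem (Λ.zsmul_mem hxΛ _)
        exact (hspan0 _ (ZSpan.floor bR ((j : ℤ) • x)).2).2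
      · rw [mem_closedBall, dist_zero_right]
        have := hRsub (ZSpan.fract_mem_fundamentalDomain bR ((j : ℤ) • x))
        rwa [mem_closedBall, dist_zero_right] at this
    set g : ℕ → ↥((Λ : Set (EuclideanSpace ℝ (Fin n))) ∩ closedBall 0 R) :=
      fun j => ⟨f j, hfmem j⟩ with hg
    obtain ⟨y, hy⟩ := Finite.exists_infinite_fiber g
    have hyinf : (g ⁻¹' {y}).Infinite := Set.infinite_coe_iff.mp hy
    obtain ⟨s, hs, -⟩ := hyinf.exists_gt 0
    obtain ⟨t, ht, hts⟩ := hyinf.exists_gt s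
    refine ⟨t - s, by omega, ?_⟩
    have hfeq : f t = f s := by
      rw [Set.mem_preimage, Set.mem_singleton_iff] at hs ht
      have : g t = g s := by rw [hs, ht]
      exact congrArg Subtype.val this
    have h4 : -((t : ℤ) • x) + (s : ℤ) • x ∈ Λ₀ :=
      hspan0 _ ((ZSpan.fract_eq_fract bR ((t : ℤ) • x) ((s : ℤ) • x)).mp hfeq)
    have h5 : ((t : ℤ) - s) • x = -(-((t : ℤ) • x) + (s : ℤ) • x) := by
      rw [sub_smul]; abel
    have h6 : ((t : ℤ) - s) • x ∈ Λ₀ := by rw [h5]; exact Λ₀.neg_mem h4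
    have h7 : ((t - s : ℕ) : ℤ) = (t : ℤ) - s := by omega
    rwa [h7]
  -- a uniform multiple using a ℤ-basis of Λ
  set L := AddSubgroup.toIntSubmodule Λ with hL
  haveI hdL : DiscreteTopology L := by
    have h : (L : Set (EuclideanSpace ℝ (Fin n))) ⊆ (Λ : Set (EuclideanSpace ℝ (Fin n))) :=
      (AddSubgroup.coe_toIntSubmodule Λ).le
    exact DiscreteTopology.of_subset hdisc h
  haveI hzL : IsZLattice ℝ L := ⟨by rw [AddSubgroup.coe_toIntSubmodule]; exact hfull⟩
  haveI := ZLattice.module_free ℝ L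
  set c0 := Module.Free.chooseBasis ℤ L with hc0
  set cR := Module.Basis.ofZLatticeBasis ℝ L c0 with hcR
  have hspanc : ∀ v : EuclideanSpace ℝ (Fin n), v ∈ Submodule.span ℤ (Set.range ⇑cR) ↔ v ∈ Λ := by
    intro v
    rw [Module.Basis.ofZLatticeBasis_span]
    constructor
    · intro hv
      have h2 : v ∈ (L : Set (EuclideanSpace ℝ (Fin n))) := hv
      rwa [hL, AddSubgroup.coe_toIntSubmodule] at h2
    · intro hv
      have h2 : v ∈ (L : Set (EuclideanSpace ℝ (Fin n))) := by
        rw [hL, AddSubgroup.coe_toIntSubmodule]; exact hv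
      exact h2
  have hcmem : ∀ i, cR i ∈ Λ := fun i =>
    (hspanc _).mp (Submodule.subset_span ⟨i, rfl⟩)
  have hkex : ∀ i, ∃ k : ℕ, 0 < k ∧ (k : ℤ) • (cR i) ∈ Λ₀ := fun i => hmult _ (hcmem i)
  choose kf hkpos hkmem using hkex
  set m : ℕ := ∏ i, kf i with hm
  have hmpos : 0 < m := Finset.prod_pos (fun i _ => hkpos i)
  -- m • x ∈ Λ₀ for every x ∈ Λ
  have hmall : ∀ x ∈ Λ, (m : ℤ) • x ∈ Λ₀ := by
    intro x hxΛ
    set M : Submodule ℤ (EuclideanSpace ℝ (Fin n)) :=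
      { carrier := {z | (m : ℤ) • z ∈ L₀}
        add_mem' := by intro a b ha hb; simp only [Set.mem_setOf_eq, smul_add] at *; exact L₀.add_mem ha hb
        zero_mem' := by simp only [Set.mem_setOf_eq, smul_zero]; exact L₀.zero_mem
        smul_mem' := by
          intro c z hz
          simp only [Set.mem_setOf_eq] at *
          rw [smul_comm]
          exact L₀.smul_mem c hz } with hM
    have hbase : ∀ i, cR i ∈ M := by
      intro i
      show (m : ℤ) • cR i ∈ L₀
      have h1 : m = (∏ j ∈ Finset.univ.erase i, kf j) * kf i := by
        rw [hm, ← Finset.prod_erase_mul Finset.univ kf (Finset.mem_univ i)]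
      rw [h1]
      push_cast
      rw [mul_smul]
      apply L₀.smul_mem
      exact hkmem i
    have hxL : x ∈ Submodule.span ℤ (Set.range ⇑cR) := (hspanc _).mpr hxΛ
    have hle : Submodule.span ℤ (Set.range ⇑cR) ≤ M := by
      rw [Submodule.span_le]
      rintro _ ⟨i, rfl⟩
      exact hbase i
    have h2 : (m : ℤ) • x ∈ (L₀ : Set (EuclideanSpace ℝ (Fin n))) := hle hxL
    rwa [hL₀, AddSubgroup.coe_toIntSubmodule] at h2
  -- conclude
  refine ⟨m * m, by positivity, ?_⟩
  intro x hx y hy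
  obtain ⟨k, hk⟩ := hZbint ((m : ℤ) • x) (hmall x hx).1 ((m : ℤ) • y) (hmall y hy).1
  refine ⟨k, ?_⟩
  rw [← hk, ← Int.cast_smul_eq_zsmul ℝ ((m:ℤ)) x, ← Int.cast_smul_eq_zsmul ℝ ((m:ℤ)) y,
    real_inner_smul_left, real_inner_smul_right]
  push_cast
  ring

end TorusAux

set_option maxHeartbeats 1000000 in
/-- Let `G` be an `n`-dimensional torus, modeled as `𝔤 ⧸ Λ` where
`𝔤 = EuclideanSpace ℝ (Fin n)` (with its Euclidean metric) and `Λ` is the integral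
lattice (discrete, of full rank).  The metric is *rational*: there is an orthonormal
basis whose generated lattice meets `Λ` in a full-rank (rank `n`) sublattice.
Then for every closed subgroup `H` of `G`, the image `H^⊥` of the orthogonal
complement of `Lie H` under the exponential (= quotient) map is a compact connected
subgroup of `G`, and `H ∩ H^⊥` is finite. -/
theorem torus_orthogonal_complement_subgroup
    {n : ℕ} (Λ : AddSubgroup (EuclideanSpace ℝ (Fin n)))
    (hdisc : DiscreteTopology Λ)
    (hfull : Submodule.span ℝ (Λ : Set (EuclideanSpace ℝ (Fin n))) = ⊤)
    (hrat : ∃ b : OrthonormalBasis (Fin n) ℝ (EuclideanSpace ℝ (Fin n)),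
      Submodule.span ℝ
        (((AddSubgroup.closure (Set.range b)) ⊓ Λ : AddSubgroup (EuclideanSpace ℝ (Fin n))) :
          Set (EuclideanSpace ℝ (Fin n))) = ⊤)
    (H : AddSubgroup (EuclideanSpace ℝ (Fin n) ⧸ Λ))
    (hH : IsClosed (H : Set (EuclideanSpace ℝ (Fin n) ⧸ Λ))) :
    ∃ K : AddSubgroup (EuclideanSpace ℝ (Fin n) ⧸ Λ),
      -- `K = H^⊥` is the image under the exponential map of the orthogonal
      -- complement of the Lie algebra of `H`
      (K : Set (EuclideanSpace ℝ (Fin n) ⧸ Λ)) =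
        (QuotientAddGroup.mk (s := Λ)) ''
          ((Submodule.span ℝ
            {ξ : EuclideanSpace ℝ (Fin n) |
              ∀ t : ℝ, (QuotientAddGroup.mk (t • ξ) : EuclideanSpace ℝ (Fin n) ⧸ Λ) ∈ H})ᗮ :
            Set (EuclideanSpace ℝ (Fin n))) ∧
      IsCompact (K : Set (EuclideanSpace ℝ (Fin n) ⧸ Λ)) ∧
      IsConnected (K : Set (EuclideanSpace ℝ (Fin n) ⧸ Λ)) ∧
      ((H : Set (EuclideanSpace ℝ (Fin n) ⧸ Λ)) ∩ (K : Set _)).Finite := by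
  classical
  set π := QuotientAddGroup.mk' Λ with hπ
  have hπcont : Continuous π := continuous_quotient_mk'
  -- the preimage subgroup
  set Γ₁ := AddSubgroup.comap π H with hΓ₁
  have hΓ₁closed : IsClosed (Γ₁ : Set (EuclideanSpace ℝ (Fin n))) := by
    rw [hΓ₁]
    rw [AddSubgroup.coe_comap]
    exact hH.preimage hπcont
  have hΛΓ₁ : Λ ≤ Γ₁ := by
    intro x hx
    rw [hΓ₁, AddSubgroup.mem_comap]
    have : π x = 0 := (QuotientAddGroup.eq_zero_iff x).mpr hx
    rw [this]
    exact H.zero_mem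
  set W := lineSub Γ₁ with hW
  -- identify the span in the statement with W
  have hWspan : Submodule.span ℝ
      {ξ : EuclideanSpace ℝ (Fin n) |
        ∀ t : ℝ, (QuotientAddGroup.mk (t • ξ) : EuclideanSpace ℝ (Fin n) ⧸ Λ) ∈ H} = W := by
    have hset : {ξ : EuclideanSpace ℝ (Fin n) |
        ∀ t : ℝ, (QuotientAddGroup.mk (t • ξ) : EuclideanSpace ℝ (Fin n) ⧸ Λ) ∈ H}
        = (W : Set (EuclideanSpace ℝ (Fin n))) := by
      ext ξ
      simp only [Set.mem_setOf_eq, SetLike.mem_coe]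
      rw [hW, lineSub_mem]
      constructor
      · intro h t; rw [hΓ₁, AddSubgroup.mem_comap]; exact h t
      · intro h t; have := h t; rwa [hΓ₁, AddSubgroup.mem_comap] at this
    rw [hset, Submodule.span_eq]
  -- rationality of W
  have hWrat : Submodule.span ℝ ((Λ : Set (EuclideanSpace ℝ (Fin n))) ∩ (W : Set (EuclideanSpace ℝ (Fin n)))) = W :=
    lineSub_rational hdisc hfull hΓ₁closed hΛΓ₁
  -- the subgroup Γ₂ whose maximal subspace is Wᗮ
  obtain ⟨N, hNpos, hNint⟩ := exists_denominator hdisc hfull hrat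
  set Γ₂ : AddSubgroup (EuclideanSpace ℝ (Fin n)) :=
    { carrier := {x | ∀ y ∈ (Λ : Set (EuclideanSpace ℝ (Fin n))) ∩ (W : Set (EuclideanSpace ℝ (Fin n))),
        ∃ k : ℤ, (N : ℝ) * (inner ℝ y x : ℝ) = k}
      add_mem' := by
        intro a b ha hb y hy
        obtain ⟨k1, hk1⟩ := ha y hy; obtain ⟨k2, hk2⟩ := hb y hy
        exact ⟨k1 + k2, by rw [inner_add_right, mul_add, hk1, hk2]; push_cast; ring⟩
      zero_mem' := by intro y hy; exact ⟨0, by simp⟩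
      neg_mem' := by
        intro a ha y hy
        obtain ⟨k, hk⟩ := ha y hy
        exact ⟨-k, by rw [inner_neg_right]; push_cast; rw [← hk]; ring⟩ } with hΓ₂
  have hΓ₂closed : IsClosed (Γ₂ : Set (EuclideanSpace ℝ (Fin n))) := by
    have : (Γ₂ : Set (EuclideanSpace ℝ (Fin n))) =
        ⋂ (y : EuclideanSpace ℝ (Fin n)) (_ : y ∈ (Λ : Set (EuclideanSpace ℝ (Fin n))) ∩ (W : Set (EuclideanSpace ℝ (Fin n)))),
          (fun x => (N : ℝ) * (inner ℝ y x : ℝ)) ⁻¹' (Set.range ((↑) : ℤ → ℝ)) := by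
      ext x
      simp only [Set.mem_iInter, Set.mem_preimage, Set.mem_range]
      constructor
      · intro hx y hy; obtain ⟨k, hk⟩ := hx y hy; exact ⟨k, hk.symm⟩
      · intro hx y hy; obtain ⟨k, hk⟩ := hx y hy; exact ⟨k, hk.symm⟩
    rw [this]
    refine isClosed_iInter fun y => isClosed_iInter fun hy => ?_
    refine IsClosed.preimage ?_ Int.isClosedEmbedding_coe_real.isClosed_range
    exact continuous_const.mul (Continuous.inner continuous_const continuous_id)
  have hΛΓ₂ : Λ ≤ Γ₂ := by
    intro x hx y hy
    exact hNint y hy.1 x hx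
  have hlineΓ₂ : lineSub Γ₂ = Wᗮ := by
    apply le_antisymm
    · intro x hx
      rw [Submodule.mem_orthogonal]
      intro u hu
      rw [← hWrat] at hu
      -- reduce to generators
      have hgen : ∀ y ∈ (Λ : Set (EuclideanSpace ℝ (Fin n))) ∩ (W : Set (EuclideanSpace ℝ (Fin n))),
          (inner ℝ y x : ℝ) = 0 := by
        intro y hy
        by_contra hc
        have hall : ∀ t : ℝ, ∃ k : ℤ, (N : ℝ) * (inner ℝ y (t • x) : ℝ) = k := by
          intro t
          have := lineSub_mem.mp hx t
          exact this y hy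
        set r := (inner ℝ y x : ℝ) with hr
        obtain ⟨k, hk⟩ := hall (1 / (2 * N * r))
        rw [real_inner_smul_right, ← hr] at hk
        have hN0 : (N : ℝ) ≠ 0 := by positivity
        have heq : (N : ℝ) * (1 / (2 * N * r) * r) = 1 / 2 := by
          field_simp
        rw [heq] at hk
        have h2k : ((2 * k : ℤ) : ℝ) = 1 := by push_cast; linarith
        have : (2 * k : ℤ) = 1 := by exact_mod_cast h2k
        omega
      -- extend to the span
      induction hu using Submodule.span_induction with
      | mem z hz => exact hgen z hz
      | zero => simp
      | add z w _ _ hz hw => rw [inner_add_left, hz, hw]; ring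
      | smul c z _ hz => rw [real_inner_smul_left, hz]; ring
    · intro x hx
      rw [lineSub_mem]
      intro t y hy
      have h0 : (inner ℝ y x : ℝ) = 0 := (Submodule.mem_orthogonal W x).mp hx y hy.2
      exact ⟨0, by rw [real_inner_smul_right, h0]; simp⟩
  have hWorat : Submodule.span ℝ ((Λ : Set (EuclideanSpace ℝ (Fin n))) ∩ (Wᗮ : Set (EuclideanSpace ℝ (Fin n)))) = Wᗮ := by
    have := lineSub_rational hdisc hfull hΓ₂closed hΛΓ₂
    rwa [hlineΓ₂] at this
  -- a finite spanning subset of the lattice points of Wᗮ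
  have hfg : ∃ T : Finset (EuclideanSpace ℝ (Fin n)),
      (T : Set (EuclideanSpace ℝ (Fin n))) ⊆ (Λ : Set (EuclideanSpace ℝ (Fin n))) ∩ (Wᗮ : Set (EuclideanSpace ℝ (Fin n))) ∧
      Submodule.span ℝ (T : Set (EuclideanSpace ℝ (Fin n))) = Wᗮ := by
    obtain ⟨S, hSfin, hSspan⟩ := Submodule.fg_def.mp (IsNoetherian.noetherian Wᗮ)
    have hx : ∀ x ∈ S, ∃ T : Finset (EuclideanSpace ℝ (Fin n)),
        (T : Set (EuclideanSpace ℝ (Fin n))) ⊆ (Λ : Set (EuclideanSpace ℝ (Fin n))) ∩ (Wᗮ : Set (EuclideanSpace ℝ (Fin n))) ∧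
        x ∈ Submodule.span ℝ (T : Set (EuclideanSpace ℝ (Fin n))) := by
      intro x hxS
      have h1 : x ∈ Submodule.span ℝ ((Λ : Set (EuclideanSpace ℝ (Fin n))) ∩ (Wᗮ : Set (EuclideanSpace ℝ (Fin n)))) := by
        rw [hWorat]
        rw [← hSspan]
        exact Submodule.subset_span hxS
      obtain ⟨T, hT1, hT2⟩ := Submodule.mem_span_finite_of_mem_span h1
      exact ⟨T, hT1, hT2⟩
    choose Tf hTf1 hTf2 using hx
    refine ⟨hSfin.toFinset.attach.biUnion (fun x => Tf (x : EuclideanSpace ℝ (Fin n)) (hSfin.mem_toFinset.mp x.2)), ?_, ?_⟩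
    · intro z hz
      simp only [Finset.coe_biUnion, Set.mem_iUnion, Finset.mem_coe] at hz
      obtain ⟨x, -, hx2⟩ := hz
      exact hTf1 _ _ hx2
    · apply le_antisymm
      · rw [Submodule.span_le]
        intro z hz
        simp only [Finset.coe_biUnion, Set.mem_iUnion, Finset.mem_coe] at hz
        obtain ⟨x, -, hx2⟩ := hz
        exact (hTf1 _ _ hx2).2
      · rw [← hSspan, Submodule.span_le]
        intro x hxS
        have := hTf2 x hxS
        refine Submodule.span_mono ?_ (hTf2 x hxS)
        intro z hz
        simp only [Finset.coe_biUnion, Set.mem_iUnion, Finset.mem_coe]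
        exact ⟨⟨x, hSfin.mem_toFinset.mpr hxS⟩, Finset.mem_attach _ _, hz⟩
  obtain ⟨T, hTsub, hTspan⟩ := hfg
  -- the compact cell spanned by T
  set φ : ({x // x ∈ T} → ℝ) → EuclideanSpace ℝ (Fin n) :=
    fun c => ∑ x ∈ T.attach, c x • (x : EuclideanSpace ℝ (Fin n)) with hφ
  set C' := φ '' (Set.univ.pi fun _ => Icc (0:ℝ) 1) with hC'
  have hφcont : Continuous φ := by
    apply continuous_finset_sum
    intro x _
    exact (continuous_apply x).smul continuous_const
  have hC'cpt : IsCompact C' := (isCompact_univ_pi fun _ => isCompact_Icc).image hφcont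
  have hC'sub : C' ⊆ (Wᗮ : Set (EuclideanSpace ℝ (Fin n))) := by
    rintro _ ⟨c, -, rfl⟩
    exact Submodule.sum_mem _ fun x _ => Wᗮ.smul_mem _ ((hTsub x.2).2)
  have hdecomp : ∀ x ∈ Wᗮ, ∃ μ : EuclideanSpace ℝ (Fin n), μ ∈ Λ ∧ μ ∈ Wᗮ ∧ x - μ ∈ C' := by
    intro x hx
    have hxT : x ∈ Submodule.span ℝ (T : Set (EuclideanSpace ℝ (Fin n))) := by rw [hTspan]; exact hx
    obtain ⟨f, -, hf⟩ := mem_span_finset.mp hxT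
    set μ := ∑ i ∈ T, (⌊f i⌋ : ℝ) • i with hμ
    refine ⟨μ, ?_, ?_, ?_⟩
    · apply AddSubgroup.sum_mem
      intro i hi
      rw [Int.cast_smul_eq_zsmul]
      exact Λ.zsmul_mem (hTsub hi).1 _
    · exact Submodule.sum_mem _ fun i hi => Wᗮ.smul_mem _ (hTsub hi).2
    · refine ⟨fun i => Int.fract (f (i : EuclideanSpace ℝ (Fin n))), ?_, ?_⟩
      · intro i _
        exact ⟨Int.fract_nonneg _, (Int.fract_lt_one _).le⟩
      · show φ (fun i => Int.fract (f (i : EuclideanSpace ℝ (Fin n)))) = x - μ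
        have h1 : ∑ i ∈ T.attach, Int.fract (f (i : EuclideanSpace ℝ (Fin n))) • (i : EuclideanSpace ℝ (Fin n))
            = ∑ i ∈ T, Int.fract (f i) • i := Finset.sum_attach T (fun i => Int.fract (f i) • i)
        simp only [hφ]
        rw [h1, ← hf, hμ, ← Finset.sum_sub_distrib]
        apply Finset.sum_congr rfl
        intro i _
        rw [Int.fract, sub_smul]
  -- the subgroup K
  refine ⟨AddSubgroup.map π Wᗮ.toAddSubgroup, ?_, ?_, ?_, ?_⟩
  · rw [hWspan, AddSubgroup.coe_map, QuotientAddGroup.coe_mk', Submodule.coe_toAddSubgroup]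
  · -- compactness
    have himg : ((AddSubgroup.map π Wᗮ.toAddSubgroup : AddSubgroup (EuclideanSpace ℝ (Fin n) ⧸ Λ)) :
        Set (EuclideanSpace ℝ (Fin n) ⧸ Λ)) = π '' C' := by
      apply Set.Subset.antisymm
      · rintro z hz
        rw [AddSubgroup.coe_map] at hz
        obtain ⟨x, hxW, rfl⟩ := hz
        obtain ⟨μ, hμΛ, -, hμC⟩ := hdecomp x hxW
        refine ⟨x - μ, hμC, ?_⟩
        rw [map_sub]
        have : π μ = 0 := (QuotientAddGroup.eq_zero_iff μ).mpr hμΛ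
        rw [this, sub_zero]
      · rintro _ ⟨c, hc, rfl⟩
        rw [AddSubgroup.coe_map]
        exact ⟨c, hC'sub hc, rfl⟩
    rw [himg]
    exact hC'cpt.image hπcont
  · -- connectedness
    have hconn : IsConnected (Wᗮ : Set (EuclideanSpace ℝ (Fin n))) :=
      ⟨⟨0, Wᗮ.zero_mem⟩, (Submodule.convex Wᗮ).isPreconnected⟩
    have : ((AddSubgroup.map π Wᗮ.toAddSubgroup : AddSubgroup (EuclideanSpace ℝ (Fin n) ⧸ Λ)) :
        Set (EuclideanSpace ℝ (Fin n) ⧸ Λ)) = π '' (Wᗮ : Set (EuclideanSpace ℝ (Fin n))) := by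
      rw [AddSubgroup.coe_map, Submodule.coe_toAddSubgroup]
    rw [this]
    exact hconn.image π hπcont.continuousOn
  · -- finiteness
    set Δ := Γ₁ ⊓ Wᗮ.toAddSubgroup with hΔ
    have hΔclosed : IsClosed (Δ : Set (EuclideanSpace ℝ (Fin n))) := by
      have : (Δ : Set (EuclideanSpace ℝ (Fin n))) =
          (Γ₁ : Set (EuclideanSpace ℝ (Fin n))) ∩ (Wᗮ : Set (EuclideanSpace ℝ (Fin n))) := rfl
      rw [this]
      exact hΓ₁closed.inter Wᗮ.closed_of_finiteDimensional
    have hΔbot : lineSub Δ = ⊥ := by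
      rw [eq_bot_iff]
      intro x hx
      have h1 : x ∈ W := by
        rw [hW, lineSub_mem]
        intro t
        exact (lineSub_mem.mp hx t).1
      have h2 : x ∈ Wᗮ := (lineSub_le hx).2
      have h3 : (inner ℝ x x : ℝ) = 0 := (Submodule.mem_orthogonal W x).mp h2 x h1
      simp [inner_self_eq_zero.mp h3]
    have hfinΔ : ((Δ : Set (EuclideanSpace ℝ (Fin n))) ∩ C').Finite :=
      finite_ball_of_lineSub_bot hΔclosed hΔbot hC'cpt.isBounded
    have hsub : (H : Set (EuclideanSpace ℝ (Fin n) ⧸ Λ)) ∩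
        ((AddSubgroup.map π Wᗮ.toAddSubgroup : AddSubgroup (EuclideanSpace ℝ (Fin n) ⧸ Λ)) : Set _)
        ⊆ π '' ((Δ : Set (EuclideanSpace ℝ (Fin n))) ∩ C') := by
      rintro z ⟨hzH, hzK⟩
      rw [SetLike.mem_coe, AddSubgroup.mem_map] at hzK
      obtain ⟨x, hxW, rfl⟩ := hzK
      have hxW' : x ∈ Wᗮ := hxW
      obtain ⟨μ, hμΛ, hμW, hμC⟩ := hdecomp x hxW'
      have hπeq : π (x - μ) = π x := by
        rw [map_sub]
        have : π μ = 0 := (QuotientAddGroup.eq_zero_iff μ).mpr hμΛ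
        rw [this, sub_zero]
      refine ⟨x - μ, ⟨?_, hμC⟩, hπeq⟩
      have hmem : x - μ ∈ Δ := by
        rw [hΔ, AddSubgroup.mem_inf]
        refine ⟨AddSubgroup.mem_comap.mpr ?_, Wᗮ.sub_mem hxW' hμW⟩
        show π (x - μ) ∈ H
        rw [hπeq]
        exact hzH
      exact hmem
    exact (hfinΔ.image π).subset hsub
end

section
/- Let G be a torus acting on a manifold V with a G-invariant almost complex structure J such that every G-orbit is totally real (ξ ∩ Jξ = 0 for any subspace ξ of the tangent space of an orbit). Let {V_H}_{H∈A} be a good open covering as above, and on V_H let Tℱ_H denote the tangent bundle along H^⊥-orbits. Then the map Tℱ_H ⊗_ℝ ℂ → TV_H, v ⊗ (a + bi) ↦ a v + b Jv, is an injective bundle map, and with a G-invariant J-compatible metric there is a canonical isomorphism of Hermitian vector bundles TV_H ≅ (Tℱ_H ⊗ ℂ) ⊕ T'V_H, where T'V_H is the orthogonal complement, inducing ∧^{0,•}T*V_H ≅ (∧^• T*ℱ_H ⊗ ℂ) ⊗ ∧^{0,•}(T'V_H)*. -/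
open RealInnerProductSpace

/-- Let a torus `G` act on `V` with a `G`-invariant almost complex
structure `J` and a `G`-invariant `J`-compatible metric, such that every `G`-orbit
is totally real.  With `V` realized inside the (tangent model) inner product space
`E`, `J x` the almost complex structure at `x` and `F x = Tℱ_H|_x` the tangent
space along the `H^⊥`-orbit foliation, the map
`Tℱ_H ⊗_ℝ ℂ → TV_H`, `v ⊗ (a+bi) ↦ a v + b (J v)`, is injective, and
`TV_H ≅ (Tℱ_H ⊗ ℂ) ⊕ T'V_H` as Hermitian vector bundles, where
`T'V_H = (Tℱ_H ⊗ ℂ)^⊥` is `J`-invariant; this induces the isomorphism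
`∧^{0,•}T*V_H ≅ (∧^•T*ℱ_H ⊗ ℂ) ⊗ ∧^{0,•}(T'V_H)*`. -/
theorem totally_real_orbits_complexified_splitting
    {E : Type*} [NormedAddCommGroup E] [InnerProductSpace ℝ E]
    [FiniteDimensional ℝ E]
    (V : Set E) (J : E → E →ₗ[ℝ] E) (F : E → Submodule ℝ E)
    -- `J` is an almost complex structure compatible with the metric
    (hJ2 : ∀ x ∈ V, ∀ v : E, J x (J x v) = -v)
    (hJmet : ∀ x ∈ V, ∀ v w : E, ⟪J x v, J x w⟫ = ⟪v, w⟫)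
    -- the orbits are totally real: `ξ ∩ Jξ = 0` for every subspace `ξ` of the
    -- tangent space `F x` of the orbit directions
    (htotreal : ∀ x ∈ V, ∀ ξ : Submodule ℝ E, ξ ≤ F x →
      ξ ⊓ ξ.map (J x) = ⊥) :
    ∀ x ∈ V,
      -- injectivity of `Tℱ ⊗_ℝ ℂ → TV`, `(u, v) ↦ u + J v`
      Function.Injective (fun p : (F x) × (F x) => (p.1 : E) + J x (p.2 : E)) ∧
      -- the complexified image `W = F + J F` is `J`-invariant, as is its
      -- orthogonal complement, and together they give an orthogonal splitting
      (Submodule.map (J x) (F x ⊔ (F x).map (J x)) = F x ⊔ (F x).map (J x)) ∧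
      (Submodule.map (J x) (F x ⊔ (F x).map (J x))ᗮ = (F x ⊔ (F x).map (J x))ᗮ) ∧
      ((F x ⊔ (F x).map (J x)) ⊔ (F x ⊔ (F x).map (J x))ᗮ = ⊤) ∧
      ((F x ⊔ (F x).map (J x)) ⊓ (F x ⊔ (F x).map (J x))ᗮ = ⊥) := by
  intro x hx
  have hJ2' := hJ2 x hx
  have hdisj : F x ⊓ (F x).map (J x) = ⊥ := htotreal x hx (F x) le_rfl
  have hJinj : Function.Injective (J x) := by
    intro a b hab
    have : J x (J x a) = J x (J x b) := by rw [hab]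
    simpa [hJ2'] using this
  -- map J (map J F) = F
  have hJJmap : ∀ S : Submodule ℝ E, ((S.map (J x)).map (J x)) = S := by
    intro S
    apply le_antisymm
    · rintro _ ⟨_, ⟨s, hs, rfl⟩, rfl⟩
      simpa [hJ2'] using S.neg_mem hs
    · intro s hs
      exact ⟨J x (-s), ⟨-s, S.neg_mem hs, rfl⟩, by simp [hJ2']⟩
  set W := F x ⊔ (F x).map (J x) with hW
  -- J-invariance of W
  have hWJ : W.map (J x) = W := by
    rw [hW, Submodule.map_sup, hJJmap, sup_comm]
  refine ⟨?_, hWJ, ?_, ?_, ?_⟩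
  · -- injectivity
    rintro ⟨u, v⟩ ⟨u', v'⟩ h
    simp only at h
    have h1 : (u : E) - u' = J x v' - J x v := by
      rw [sub_eq_sub_iff_add_eq_add]
      exact h.trans (add_comm _ _)
    have key : ((u : E) - u') ∈ F x ⊓ (F x).map (J x) :=
      ⟨sub_mem u.2 u'.2, ⟨(v' : E) - v, sub_mem v'.2 v.2, by rw [map_sub, ← h1]⟩⟩
    rw [hdisj, Submodule.mem_bot, sub_eq_zero] at key
    have hv : (v : E) = v' := by
      apply hJinj
      have : J x v' - J x v = 0 := by rw [← h1, key, sub_self]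
      rw [sub_eq_zero] at this
      exact this.symm
    exact Prod.ext (Subtype.ext key) (Subtype.ext hv)
  · -- orthogonal complement J-invariant
    have hle : ∀ w ∈ Wᗮ, J x w ∈ Wᗮ := by
      intro w hw u hu
      have : u = J x (J x (-u)) := by simp [hJ2']
      rw [real_inner_comm, this, hJmet x hx]
      have hJu : J x (-u) ∈ W := by rw [← hWJ]; exact ⟨-u, W.neg_mem hu, rfl⟩
      rw [real_inner_comm]
      exact hw _ hJu
    apply le_antisymm
    · rintro _ ⟨w, hw, rfl⟩; exact hle w hw
    · intro w hw
      refine ⟨J x (-w), hle _ (Wᗮ.neg_mem hw), by simp [hJ2']⟩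
  · exact Submodule.sup_orthogonal_of_hasOrthogonalProjection
  · rw [Submodule.inf_orthogonal_eq_bot]
end
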